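/- Let (X, ‖·‖) be a Banach space and T : X → X a mapping. Suppose there exist b ∈ [0, ∞) and θ ∈ [0, b+1), and set λ = 1/(b+1) and r = θλ, such that for all x, y ∈ X: ψ(r)‖x − Tx‖ ≤ ‖x − y‖ implies ‖b(x − y) + Tx − Ty‖ ≤ θ‖x − y‖. Then T has a unique fixed point. -/

import Mathlib

/-- The function ψ from the paper: ψ(r) = λ on [0, (√5−1)/2],
    λ(1−r)/r² on ((√5−1)/2, 1/√2), and λ/(1+r) on [1/√2, 1). -/
noncomputable def suzukiPsi (lam r : ℝ) : ℝ :=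
  if r ≤ (Real.sqrt 5 - 1) / 2 then lam
  else if r < 1 / Real.sqrt 2 then lam * (1 - r) / r ^ 2
  else lam / (1 + r)

open Filter Topology

set_option maxHeartbeats 1000000

lemma suzuki_aux {X : Type*} [MetricSpace X] [CompleteSpace X] [Nonempty X]
    (S : X → X) (φ r : ℝ) (hφ0 : 0 ≤ φ) (hφ1 : φ ≤ 1) (hr0 : 0 ≤ r) (hr1 : r < 1)
    (hcase : (φ * r ^ 2 ≤ 1 - r ∧ 2 * r ^ 2 < 1) ∨ φ * (1 + r) ≤ 1)
    (K : ∀ x y, φ * dist x (S x) ≤ dist x y → dist (S x) (S y) ≤ r * dist x y) :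
    ∃ z, S z = z := by
  have step1 : ∀ x, dist (S x) (S (S x)) ≤ r * dist x (S x) := by
    intro x
    refine K x (S x) ?_
    nlinarith [dist_nonneg (x := x) (y := S x)]
  set x₀ := Classical.arbitrary X with hx₀
  set u : ℕ → X := fun n => S^[n] x₀ with hu_def
  have hu : ∀ n, u (n + 1) = S (u n) := fun n => Function.iterate_succ_apply' S n x₀
  have hgeo : ∀ n, dist (u n) (u (n + 1)) ≤ dist x₀ (S x₀) * r ^ n := by
    intro n; induction n with
    | zero => simp [hu 0, hu_def]
    | succ n ih =>
      have h1 := step1 (u n)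
      rw [← hu n] at h1
      rw [← hu (n + 1)] at h1
      calc dist (u (n + 1)) (u (n + 2)) ≤ r * dist (u n) (u (n + 1)) := h1
        _ ≤ r * (dist x₀ (S x₀) * r ^ n) := mul_le_mul_of_nonneg_left ih hr0
        _ = dist x₀ (S x₀) * r ^ (n + 1) := by ring
  have hcauchy : CauchySeq u := cauchySeq_of_le_geometric r _ hr1 hgeo
  obtain ⟨z, hz⟩ := cauchySeq_tendsto_of_complete hcauchy
  -- step 3: for all x ≠ z, dist (S x) z ≤ r * dist x z
  have step3 : ∀ x, x ≠ z → dist (S x) z ≤ r * dist x z := by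
    intro x hx
    have hD : 0 < dist x z := dist_pos.2 hx
    obtain ⟨N, hN⟩ := Metric.tendsto_atTop.mp hz (dist x z / 3) (by positivity)
    have key : ∀ n ≥ N, dist (u (n + 1)) (S x) ≤ r * dist (u n) x := by
      intro n hn
      have h1 := hN n hn
      have h2 := hN (n + 1) (by omega)
      have htri : dist x z ≤ dist x (u n) + dist (u n) z := dist_triangle x (u n) z
      have htri2 : dist (u n) (u (n + 1)) ≤ dist (u n) z + dist z (u (n + 1)) :=
        dist_triangle _ _ _
      have hcm : dist z (u (n + 1)) = dist (u (n + 1)) z := dist_comm _ _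
      have hcm2 : dist x (u n) = dist (u n) x := dist_comm _ _
      have hφd : φ * dist (u n) (S (u n)) ≤ dist (u n) x := by
        rw [← hu n]
        nlinarith [dist_nonneg (x := u n) (y := u (n + 1))]
      have h3 := K (u n) x hφd
      rw [← hu n] at h3
      exact h3
    have t1 : Tendsto (fun n => dist (u (n + 1)) (S x)) atTop (𝓝 (dist z (S x))) :=
      ((hz.comp (tendsto_add_atTop_nat 1)).dist tendsto_const_nhds)
    have t2 : Tendsto (fun n => r * dist (u n) x) atTop (𝓝 (r * dist z x)) :=
      tendsto_const_nhds.mul (hz.dist tendsto_const_nhds)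
    have hle : dist z (S x) ≤ r * dist z x :=
      le_of_tendsto_of_tendsto t1 t2 (eventually_atTop.2 ⟨N, key⟩)
    rw [dist_comm (S x) z, dist_comm x z]
    exact hle
  refine ⟨z, ?_⟩
  by_contra hsz
  have hzne : z ≠ S z := fun h => hsz h.symm
  have ha : 0 < dist z (S z) := dist_pos.2 hzne
  have hSzz : S z ≠ z := hsz
  obtain ⟨hA1, hA2⟩ | hB := hcase
  · -- Case A
    have h2 : S (S z) ≠ z := by
      intro he
      have e1 : dist (S (S z)) (S (S (S z))) ≤ r * dist (S z) (S (S z)) := step1 (S z)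
      rw [he] at e1
      rw [dist_comm (S z) z] at e1
      nlinarith
    have d1 : dist (S z) (S (S z)) ≤ r * dist z (S z) := step1 z
    have e1 : dist (S (S z)) z ≤ r * dist (S z) z := step3 (S z) hSzz
    have d2 : dist (S (S z)) (S (S (S z))) ≤ r * dist (S z) (S (S z)) := step1 (S z)
    have e2 : dist (S (S (S z))) z ≤ r * dist (S (S z)) z := step3 (S (S z)) h2
    rw [dist_comm (S z) z] at e1
    have e1' : dist (S (S z)) z ≤ r * dist z (S z) := e1
    have hlow : (1 - r) * dist z (S z) ≤ dist (S (S z)) z := by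
      have htri := dist_triangle z (S (S z)) (S z)
      have hc1 := dist_comm z (S (S z))
      have hc2 := dist_comm (S (S z)) (S z)
      nlinarith
    have hkey : φ * dist (S (S z)) (S (S (S z))) ≤ dist (S (S z)) z := by
      have hd2' : dist (S (S z)) (S (S (S z))) ≤ r * (r * dist z (S z)) :=
        le_trans d2 (mul_le_mul_of_nonneg_left d1 hr0)
      nlinarith [mul_le_mul_of_nonneg_left hd2' hφ0]
    have hK := K (S (S z)) z hkey
    have e2' : dist (S (S (S z))) z ≤ r * (r * dist z (S z)) :=
      le_trans e2 (mul_le_mul_of_nonneg_left e1' hr0)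
    have hK' : dist (S (S (S z))) (S z) ≤ r * (r * dist z (S z)) :=
      le_trans hK (mul_le_mul_of_nonneg_left e1' hr0)
    have htri := dist_triangle z (S (S (S z))) (S z)
    have hc3 := dist_comm z (S (S (S z)))
    nlinarith
  · -- Case B
    have hfix : ∀ n, u n ≠ S (u n) := by
      intro n he
      have hconst : ∀ m, u (m + n) = u n := by
        intro m; induction m with
        | zero => simp
        | succ m ih =>
          have : m + 1 + n = (m + n) + 1 := by omega
          rw [this, hu (m + n), ih, ← he]
      have h1 : Tendsto (fun m => u (m + n)) atTop (𝓝 z) := hz.comp (tendsto_add_atTop_nat n)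
      have h2 : Tendsto (fun m => u (m + n)) atTop (𝓝 (u n)) := by
        simp only [hconst]; exact tendsto_const_nhds
      have hzu : u n = z := tendsto_nhds_unique h2 h1
      rw [hzu] at he
      exact hsz he.symm
    have halt : ∀ n, dist z (S z) ≤
        dist z (u (n + 1)) + r * dist (u n) z + (dist z (u (n + 2)) + r * dist (u (n + 1)) z) := by
      intro n
      have hd : 0 < dist (u n) (u (n + 1)) := by
        rw [hu n]; exact dist_pos.2 (hfix n)
      by_cases hcA : φ * dist (u n) (S (u n)) ≤ dist (u n) z
      · have hK := K (u n) z hcA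
        rw [← hu n] at hK
        have htr : dist z (S z) ≤ dist z (u (n + 1)) + dist (u (n + 1)) (S z) :=
          dist_triangle _ _ _
        have h0 : (0:ℝ) ≤ dist z (u (n + 2)) + r * dist (u (n + 1)) z := by positivity
        linarith
      · have hcB : φ * dist (u (n + 1)) (S (u (n + 1))) ≤ dist (u (n + 1)) z := by
          by_contra hcB'
          push_neg at hcA hcB'
          have hs1 := step1 (u n)
          rw [← hu n] at hs1
          rw [← hu n] at hcA
          have htr := dist_triangle (u n) z (u (n + 1))
          have hc := dist_comm z (u (n + 1))
          nlinarith [mul_le_mul_of_nonneg_left hs1 hφ0]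
        have hK := K (u (n + 1)) z hcB
        rw [← hu (n + 1)] at hK
        have htr : dist z (S z) ≤ dist z (u (n + 2)) + dist (u (n + 2)) (S z) :=
          dist_triangle _ _ _
        have h0 : (0:ℝ) ≤ dist z (u (n + 1)) + r * dist (u n) z := by positivity
        linarith
    have L : ∀ k : ℕ, Tendsto (fun n => dist (u (n + k)) z) atTop (𝓝 0) := by
      intro k
      have h : Tendsto (fun n => dist (u (n + k)) z) atTop (𝓝 (dist z z)) :=
        (hz.comp (tendsto_add_atTop_nat k)).dist tendsto_const_nhds
      simpa using h
    have l1 : Tendsto (fun n => dist z (u (n + 1))) atTop (𝓝 0) := by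
      simpa [dist_comm] using L 1
    have l2 : Tendsto (fun n => dist (u n) z) atTop (𝓝 0) := by
      simpa using L 0
    have l3 : Tendsto (fun n => dist z (u (n + 2))) atTop (𝓝 0) := by
      simpa [dist_comm] using L 2
    have l4 : Tendsto (fun n => dist (u (n + 1)) z) atTop (𝓝 0) := L 1
    have hfin : Tendsto (fun n => dist z (u (n + 1)) + r * dist (u n) z +
        (dist z (u (n + 2)) + r * dist (u (n + 1)) z)) atTop (𝓝 0) := by
      have m2 : Tendsto (fun n => r * dist (u n) z) atTop (𝓝 (r * 0)) := l2.const_mul r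
      have m4 : Tendsto (fun n => r * dist (u (n + 1)) z) atTop (𝓝 (r * 0)) := l4.const_mul r
      have := (l1.add m2).add (l3.add m4)
      simpa using this
    have hle : dist z (S z) ≤ 0 :=
      le_of_tendsto_of_tendsto' tendsto_const_nhds hfin halt
    linarith


theorem stmt_0 {X : Type*} [NormedAddCommGroup X] [NormedSpace ℝ X] [CompleteSpace X]
    (T : X → X) (b θ : ℝ) (hb : 0 ≤ b) (hθ0 : 0 ≤ θ) (hθ : θ < b + 1)
    (H : ∀ x y : X,
      suzukiPsi (1 / (b + 1)) (θ * (1 / (b + 1))) * ‖x - T x‖ ≤ ‖x - y‖ →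
      ‖b • (x - y) + T x - T y‖ ≤ θ * ‖x - y‖) :
    ∃! p : X, T p = p := by
  have hb1 : (0:ℝ) < b + 1 := by linarith
  have hbne : (b:ℝ) + 1 ≠ 0 := ne_of_gt hb1
  set lam : ℝ := 1 / (b + 1) with hlam_def
  have hlam : 0 < lam := by rw [hlam_def]; positivity
  set r : ℝ := θ * lam with hr_def
  set ψ : ℝ := suzukiPsi lam r with hψ_def
  have hbl : (b + 1) * lam = 1 := by rw [hlam_def]; field_simp
  have hr0 : 0 ≤ r := by rw [hr_def, hlam_def]; positivity
  have hr1 : r < 1 := by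
    rw [hr_def, hlam_def, mul_one_div]
    exact (div_lt_one hb1).2 hθ
  set S : X → X := fun x => lam • (b • x + T x) with hS_def
  have hS1 : ∀ x : X, x - S x = lam • (x - T x) := by
    intro x
    show x - lam • (b • x + T x) = lam • (x - T x)
    rw [hlam_def]
    match_scalars <;> field_simp <;> ring
  have hnorm : ∀ v : X, ‖lam • v‖ = lam * ‖v‖ := by
    intro v; rw [norm_smul, Real.norm_eq_abs, abs_of_pos hlam]
  have hdxSx : ∀ x : X, dist x (S x) = lam * ‖x - T x‖ := by
    intro x; rw [dist_eq_norm, hS1, hnorm]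
  have hS2 : ∀ x y : X, S x - S y = lam • (b • (x - y) + T x - T y) := by
    intro x y
    show lam • (b • x + T x) - lam • (b • y + T y) = lam • (b • (x - y) + T x - T y)
    module
  have K : ∀ x y : X, (b + 1) * ψ * dist x (S x) ≤ dist x y →
      dist (S x) (S y) ≤ r * dist x y := by
    intro x y hxy
    rw [hdxSx, dist_eq_norm] at hxy
    have h1 : ψ * ‖x - T x‖ ≤ ‖x - y‖ := by
      calc ψ * ‖x - T x‖ = ((b + 1) * lam) * (ψ * ‖x - T x‖) := by rw [hbl]; ring
        _ = (b + 1) * ψ * (lam * ‖x - T x‖) := by ring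
        _ ≤ ‖x - y‖ := hxy
    have h2 := H x y h1
    rw [dist_eq_norm, dist_eq_norm, hS2, hnorm]
    calc lam * ‖b • (x - y) + T x - T y‖ ≤ lam * (θ * ‖x - y‖) :=
        mul_le_mul_of_nonneg_left h2 hlam.le
      _ = r * ‖x - y‖ := by rw [hr_def]; ring
  have hsq5 : Real.sqrt 5 ^ 2 = 5 := Real.sq_sqrt (by norm_num)
  have hsq5' : 0 ≤ Real.sqrt 5 := Real.sqrt_nonneg 5
  have hsq2 : Real.sqrt 2 ^ 2 = 2 := Real.sq_sqrt (by norm_num)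
  have hsq2' : 0 ≤ Real.sqrt 2 := Real.sqrt_nonneg 2
  have h2pos : 0 < Real.sqrt 2 := by nlinarith
  have hφprops : 0 ≤ (b + 1) * ψ ∧ (b + 1) * ψ ≤ 1 ∧
      (((b + 1) * ψ * r ^ 2 ≤ 1 - r ∧ 2 * r ^ 2 < 1) ∨ (b + 1) * ψ * (1 + r) ≤ 1) := by
    rw [hψ_def]
    simp only [suzukiPsi]
    split_ifs with hc1 hc2
    · rw [hbl]
      have h5gt : 2 < Real.sqrt 5 := by nlinarith [hsq5, hsq5']
      have hcr : 0 ≤ (Real.sqrt 5 - 1) / 2 + r := by nlinarith [h5gt]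
      refine ⟨by norm_num, le_refl 1, Or.inl ⟨?_, ?_⟩⟩
      · nlinarith [hc1, hr0, hsq5, h5gt, hcr]
      · nlinarith [hc1, hr0, hsq5, h5gt, hcr]
    · push_neg at hc1
      have hrpos : 0 < r := by nlinarith
      have hφeq : (b + 1) * (lam * (1 - r) / r ^ 2) = (1 - r) / r ^ 2 := by
        rw [show (b + 1) * (lam * (1 - r) / r ^ 2)
            = ((b + 1) * lam) * ((1 - r) / r ^ 2) by ring, hbl, one_mul]
      rw [hφeq]
      have h1r : (0:ℝ) ≤ 1 - r := by linarith
      refine ⟨div_nonneg h1r (by positivity), ?_, Or.inl ⟨?_, ?_⟩⟩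
      · rw [div_le_one (by positivity)]
        nlinarith
      · rw [div_mul_cancel₀ _ (by positivity : (r:ℝ) ^ 2 ≠ 0)]
      · have hrs : r * Real.sqrt 2 < 1 := (lt_div_iff₀ h2pos).mp hc2
        nlinarith
    · push_neg at hc1 hc2
      have h1r : (0:ℝ) < 1 + r := by linarith
      have hφeq : (b + 1) * (lam / (1 + r)) = 1 / (1 + r) := by
        rw [show (b + 1) * (lam / (1 + r)) = ((b + 1) * lam) * (1 / (1 + r)) by ring,
          hbl, one_mul]
      rw [hφeq]
      refine ⟨by positivity, ?_, Or.inr ?_⟩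
      · rw [div_le_one h1r]; linarith
      · rw [div_mul_cancel₀ _ (ne_of_gt h1r)]
  haveI : Nonempty X := ⟨0⟩
  obtain ⟨hφ0, hφ1, hcase⟩ := hφprops
  obtain ⟨z, hzfix⟩ := suzuki_aux S ((b + 1) * ψ) r hφ0 hφ1 hr0 hr1 hcase K
  have hTz : T z = z := by
    have h1 : (b + 1) • S z = (b + 1) • z := by rw [hzfix]
    have h2 : (b + 1) • S z = b • z + T z := by
      show (b + 1) • (lam • (b • z + T z)) = b • z + T z
      rw [smul_smul, hbl, one_smul]
    rw [h2, show (b + 1) • z = b • z + z by rw [add_smul, one_smul]] at h1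
    exact add_left_cancel h1
  refine ⟨z, hTz, ?_⟩
  intro p hp
  have h1 : ψ * ‖p - T p‖ ≤ ‖p - z‖ := by
    rw [hp, sub_self, norm_zero, mul_zero]
    exact norm_nonneg _
  have h2 := H p z h1
  rw [hp, hTz] at h2
  rw [show b • (p - z) + p - z = (b + 1) • (p - z) by module] at h2
  rw [norm_smul, Real.norm_eq_abs, abs_of_pos hb1] at h2
  have h4 : ‖p - z‖ = 0 := by
    by_contra hne
    have hpos : 0 < ‖p - z‖ := lt_of_le_of_ne (norm_nonneg _) (Ne.symm hne)
    have := mul_lt_mul_of_pos_right hθ hpos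
    linarith
  exact sub_eq_zero.mp (norm_eq_zero.mp h4)
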